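/- Let J be a lsc proper convex function, A ∈ ℝ^{m×n}, b₀ = Ax₀. Suppose x₀ is a sharp solution of min{J(x) : Ax = b₀}: equivalently, there exists α > 0 with ‖Ah‖ ≥ α‖h‖ for all h ∈ cl D_J(x₀). Then for any δ > 0 and any b with ‖Ax₀ - b‖ ≤ δ, every minimizer x^δ of J over {x : ‖Ax - b‖ ≤ δ} satisfies ‖x^δ - x₀‖ ≤ 2δ/α. -/
import Mathlib


open scoped InnerProductSpace

/-- Let `J` be lsc proper convex, `b₀ = A x₀`, and suppose there is
`α > 0` with `‖Ah‖ ≥ α‖h‖` for all `h ∈ cl D_J(x₀)` (x₀ is a sharp solution). Then for any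
`δ > 0` and `b` with `‖Ax₀ - b‖ ≤ δ`, every minimizer `x^δ` of `J` over `{x : ‖Ax - b‖ ≤ δ}`
satisfies `‖x^δ - x₀‖ ≤ 2δ/α`. -/
theorem robust_recovery_linear_rate_of_sharp
    (n m : ℕ) (J : EuclideanSpace ℝ (Fin n) → EReal)
    (hproper_bot : ∀ x, ⊥ < J x) (hproper_top : ∃ x, J x < ⊤)
    (hconvex : ∀ x y, ∀ a b : ℝ, 0 ≤ a → 0 ≤ b → a + b = 1 →
      J (a • x + b • y) ≤ (a : EReal) * J x + (b : EReal) * J y)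
    (hlsc : LowerSemicontinuous J)
    (A : EuclideanSpace ℝ (Fin n) →L[ℝ] EuclideanSpace ℝ (Fin m))
    (x₀ : EuclideanSpace ℝ (Fin n)) (b₀ : EuclideanSpace ℝ (Fin m)) (hb₀ : b₀ = A x₀)
    (α : ℝ) (hα : 0 < α)
    (hcone : ∀ h ∈ closure {hh | ∃ l > (0 : ℝ), ∃ x, J x ≤ J x₀ ∧ hh = l • (x - x₀)},
      α * ‖h‖ ≤ ‖A h‖)
    (δ : ℝ) (hδ : 0 < δ) (b : EuclideanSpace ℝ (Fin m)) (hb : ‖A x₀ - b‖ ≤ δ)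
    (xδ : EuclideanSpace ℝ (Fin n)) (hfeas : ‖A xδ - b‖ ≤ δ)
    (hopt : ∀ x, ‖A x - b‖ ≤ δ → J xδ ≤ J x) :
    ‖xδ - x₀‖ ≤ 2 * δ / α := by
  have hmem : xδ - x₀ ∈ closure {hh | ∃ l > (0 : ℝ), ∃ x, J x ≤ J x₀ ∧ hh = l • (x - x₀)} := by
    apply subset_closure
    exact ⟨1, one_pos, xδ, hopt x₀ hb, by simp⟩
  have h1 : α * ‖xδ - x₀‖ ≤ ‖A (xδ - x₀)‖ := hcone _ hmem
  have h2 : ‖A (xδ - x₀)‖ ≤ 2 * δ := by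
    have : A (xδ - x₀) = (A xδ - b) - (A x₀ - b) := by simp [map_sub]
    rw [this]
    calc ‖(A xδ - b) - (A x₀ - b)‖ ≤ ‖A xδ - b‖ + ‖A x₀ - b‖ := norm_sub_le _ _
      _ ≤ 2 * δ := by linarith
  rw [le_div_iff₀ hα, mul_comm]
  linarith
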